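/- In the time-dependent pure exchange economy, fix i and p̄ ∈ D̃, and suppose ∫_0^T x̄_i^j(t) dt < r_j for every good j, where x̄_i ∈ K̃_i(p̄) = M_i(p̄) ∩ H. If x̄_i* ∈ L satisfies ⟪x̄_i*, y_i − x̄_i⟫_m ≥ 0 for all y_i ∈ K̃_i(p̄), then ⟪x̄_i*, y_i − x̄_i⟫_m ≥ 0 for all y_i ∈ M_i(p̄); that is, a solution of the variational inequality over the truncated budget set K̃_i(p̄) also solves it over the full (unbounded) budget set M_i(p̄). -/

import Mathlib

/-!
STATEMENT 11: In the time-dependent pure exchange economy, a solution of the variational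
inequality over the truncated budget set `K̃_i(p̄) = M_i(p̄) ∩ H` whose consumption is
strictly below the truncation levels (`∫₀ᵀ x̄_iʲ(t) dt < r_j` for every good `j`) also
solves the variational inequality over the full (unbounded) budget set `M_i(p̄)`.

Membership of `p̄` in the price set `D̃` is expressed through its defining pointwise
properties: the components of `p̄` are nonnegative and sum to one a.e.
-/

open MeasureTheory
open scoped RealInnerProductSpace

noncomputable section

/-- Lebesgue measure restricted to the time interval `[0, T]`. -/
def timeMeasure (T : ℝ) : Measure ℝ := volume.restrict (Set.Icc 0 T)

/-- The commodity space `L = L²([0,T], ℝ^m)`, with its `L²` (real) inner product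
`⟪h, g⟫ = ∫₀ᵀ ⟨h t, g t⟩ dt`. -/
abbrev EcoL (m : ℕ) (T : ℝ) := Lp (EuclideanSpace ℝ (Fin m)) 2 (timeMeasure T)

/-- The ordered cone `C_L = {α ∈ L : αʲ(t) ≥ 0 for a.e. t, for all goods j}`. -/
def CL (m : ℕ) (T : ℝ) : Set (EcoL m T) :=
  {x | ∀ j : Fin m, ∀ᵐ t ∂(timeMeasure T), 0 ≤ x t j}

/-- The budget set `M_i(p) = {x ∈ C_L : ⟪p, x − e_i⟫ ≤ 0}` of an agent with endowment `e`. -/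
def budgetSet (m : ℕ) (T : ℝ) (e p : EcoL m T) : Set (EcoL m T) :=
  {x ∈ CL m T | ⟪p, x - e⟫ ≤ 0}

/-- The truncation set `H = ∏_j H_j`, where
`H_j = {α ∈ L²([0,T],ℝ) : α(t) ≥ 0 a.e., ∫₀ᵀ α(t) dt ≤ r_j}`. -/
def Hset (m : ℕ) (T : ℝ) (r : Fin m → ℝ) : Set (EcoL m T) :=
  {x | ∀ j : Fin m, (∀ᵐ t ∂(timeMeasure T), 0 ≤ x t j) ∧
    ∫ t, x t j ∂(timeMeasure T) ≤ r j}

/-- The truncated budget set `K̃_i(p) = M_i(p) ∩ H`. -/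
def truncBudget (m : ℕ) (T : ℝ) (e : EcoL m T) (r : Fin m → ℝ) (p : EcoL m T) :
    Set (EcoL m T) :=
  budgetSet m T e p ∩ Hset m T r

/-- The mean value utility `𝒰(x) = ∫₀ᵀ u(t, x(t)) dt`. -/
def meanUtility (m : ℕ) (T : ℝ) (u : ℝ → EuclideanSpace ℝ (Fin m) → ℝ) (x : EcoL m T) : ℝ :=
  ∫ t, u t (x t) ∂(timeMeasure T)

/-- Assumption (A1) on a utility function `u`, with gradient (in the second variable) `G`:
`u(t,w)` is measurable in `t` for each `w`; `u(t,·)` is concave on `ℝ^m₊` for a.e. `t`;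
`u(t,·)` is `C¹` on `ℝ^m₊` (with gradient `G(t,·)`) for a.e. `t`; `G(·,w)` is measurable for
each `w`; and the growth condition `‖∇u(t,w)‖ ≤ C‖w‖ + g(t)` holds on `ℝ^m₊` for a.e. `t`,
for some `C > 0` and some nonnegative `g ∈ L²([0,T],ℝ)`. -/
def AssumptionA1 (m : ℕ) (T : ℝ) (u : ℝ → EuclideanSpace ℝ (Fin m) → ℝ)
    (G : ℝ → EuclideanSpace ℝ (Fin m) → EuclideanSpace ℝ (Fin m)) : Prop :=
  (∀ w, Measurable fun t => u t w) ∧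
  (∀ᵐ t ∂(timeMeasure T), ConcaveOn ℝ {w : EuclideanSpace ℝ (Fin m) | ∀ j, 0 ≤ w j} (u t)) ∧
  (∀ᵐ t ∂(timeMeasure T), ∀ w : EuclideanSpace ℝ (Fin m), (∀ j, 0 ≤ w j) →
    HasGradientAt (u t) (G t w) w) ∧
  (∀ w, Measurable fun t => G t w) ∧
  (∃ C > (0:ℝ), ∃ g : ℝ → ℝ, MemLp g 2 (timeMeasure T) ∧
    (∀ᵐ t ∂(timeMeasure T), 0 ≤ g t) ∧
    (∀ᵐ t ∂(timeMeasure T), ∀ w : EuclideanSpace ℝ (Fin m), (∀ j, 0 ≤ w j) →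
      ‖G t w‖ ≤ C * ‖w‖ + g t))

/-- **Lemma (from the truncated budget set to the full budget set).**
Fix an agent `i` and `p̄ ∈ D̃`, and suppose `x̄_i ∈ K̃_i(p̄) = M_i(p̄) ∩ H` satisfies
`∫₀ᵀ x̄_iʲ(t) dt < r_j` for every good `j`, where `r_j > ∫₀ᵀ Σ_i e_iʲ(t) dt`. If `x̄_i* ∈ L`
satisfies `⟪x̄_i*, y_i − x̄_i⟫ ≥ 0` for all `y_i ∈ K̃_i(p̄)`, then
`⟪x̄_i*, y_i − x̄_i⟫ ≥ 0` for all `y_i ∈ M_i(p̄)`. -/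
theorem truncated_budget_vi_solves_full_budget_vi
    (m n : ℕ) (T : ℝ) (hT : 0 < T) (i : Fin n)
    (e : Fin n → EcoL m T) (he : ∀ i', e i' ∈ CL m T)
    (r : Fin m → ℝ) (hr : ∀ j, ∫ t, (∑ i', e i' t j) ∂(timeMeasure T) < r j)
    (pbar : EcoL m T)
    (hpbar_nonneg : ∀ j, ∀ᵐ t ∂(timeMeasure T), 0 ≤ pbar t j)
    (hpbar_sum : ∀ᵐ t ∂(timeMeasure T), ∑ j, pbar t j = 1)
    (xbar : EcoL m T) (hxbar : xbar ∈ truncBudget m T (e i) r pbar)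
    (hstrict : ∀ j, ∫ t, xbar t j ∂(timeMeasure T) < r j)
    (xs : EcoL m T)
    (hVI : ∀ y ∈ truncBudget m T (e i) r pbar, 0 ≤ ⟪xs, y - xbar⟫) :
    ∀ y ∈ budgetSet m T (e i) pbar, 0 ≤ ⟪xs, y - xbar⟫ := by
  classical
  intro y hy
  set μ := timeMeasure T with hμ
  haveI : IsFiniteMeasure μ := by
    constructor
    simp [hμ, timeMeasure, Measure.restrict_apply, Real.volume_Icc]
  have hint : ∀ (z : EcoL m T) (j : Fin m), Integrable (fun t => z t j) μ := by
    intro z j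
    have h1 : Integrable (fun t => (z : ℝ → EuclideanSpace ℝ (Fin m)) t) μ :=
      (Lp.memLp z).integrable (by norm_num)
    exact (EuclideanSpace.proj (𝕜 := ℝ) j).integrable_comp h1
  set X : Fin m → ℝ := fun j => ∫ t, xbar t j ∂μ with hX
  set I : Fin m → ℝ := fun j => ∫ t, y t j ∂μ with hI
  rcases isEmpty_or_nonempty (Fin m) with hm | hm
  · exact hVI y ⟨hy, fun j => isEmptyElim j⟩
  · set ε : Fin m → ℝ := fun j => if I j ≤ r j then 1 else (r j - X j) / (I j - X j) with hε
    have hεpos : ∀ j, 0 < ε j := by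
      intro j
      by_cases h : I j ≤ r j
      · simp [hε, h]
      · push_neg at h
        have hden : 0 < I j - X j := by
          have := hstrict j
          simp only [hX, hI] at *
          linarith
        have hnum : 0 < r j - X j := by
          have := hstrict j
          simp only [hX] at *
          linarith
        simp only [hε, if_neg (not_le.mpr h)]
        exact div_pos hnum hden
    set lam : ℝ := min 1 (Finset.univ.inf' Finset.univ_nonempty ε) with hlam
    have hpos : 0 < lam := by
      apply lt_min one_pos
      rw [Finset.lt_inf'_iff]
      intro j _
      exact hεpos j
    have hle1 : lam ≤ 1 := min_le_left _ _
    have hleε : ∀ j, lam ≤ ε j := fun j =>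
      (min_le_right _ _).trans (Finset.inf'_le ε (Finset.mem_univ j))
    have hkey : ∀ j, X j + lam * (I j - X j) ≤ r j := by
      intro j
      by_cases h : I j ≤ r j
      · nlinarith [mul_nonneg (sub_nonneg.2 hle1) (sub_nonneg.2 (le_of_lt (hstrict j))),
          mul_nonneg hpos.le (sub_nonneg.2 h)]
      · push_neg at h
        have hden : 0 < I j - X j := by
          have := hstrict j; simp only [hX, hI] at *; linarith
        have hεj : ε j = (r j - X j) / (I j - X j) := by
          simp [hε, not_le.mpr h]
        have h2 : lam * (I j - X j) ≤ r j - X j := by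
          have := hleε j
          rw [hεj] at this
          calc lam * (I j - X j) ≤ ((r j - X j) / (I j - X j)) * (I j - X j) :=
                mul_le_mul_of_nonneg_right this hden.le
            _ = r j - X j := div_mul_cancel₀ _ hden.ne'
        linarith
    set yl : EcoL m T := xbar + lam • (y - xbar) with hyl
    have hcoe : ∀ᵐ t ∂μ, yl t = xbar t + lam • (y t - xbar t) := by
      filter_upwards [Lp.coeFn_add xbar (lam • (y - xbar)),
        Lp.coeFn_smul lam (y - xbar), Lp.coeFn_sub y xbar] with t h1 h2 h3
      rw [hyl]
      simp only [h1, Pi.add_apply, h2, Pi.smul_apply, h3, Pi.sub_apply]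
    have hCL : ∀ j : Fin m, ∀ᵐ t ∂μ, 0 ≤ yl t j := by
      intro j
      filter_upwards [hcoe, hxbar.1.1 j, hy.1 j] with t ht hx hyt
      rw [ht]
      have : (xbar t + lam • (y t - xbar t)) j
          = xbar t j + lam * (y t j - xbar t j) := by
        simp [PiLp.add_apply, PiLp.smul_apply, PiLp.sub_apply, smul_eq_mul]
      rw [this]
      nlinarith [mul_nonneg hpos.le hyt, mul_nonneg (sub_nonneg.2 hle1) hx]
    have hbudget : ⟪pbar, yl - e i⟫ ≤ 0 := by
      have hdecomp : yl - e i = (1 - lam) • (xbar - e i) + lam • (y - e i) := by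
        rw [hyl]; module
      rw [hdecomp, inner_add_right, real_inner_smul_right, real_inner_smul_right]
      have hA : ⟪pbar, xbar - e i⟫ ≤ 0 := hxbar.1.2
      have hB : ⟪pbar, y - e i⟫ ≤ 0 := hy.2
      nlinarith [mul_nonneg (sub_nonneg.2 hle1) (neg_nonneg.2 hA),
        mul_nonneg hpos.le (neg_nonneg.2 hB)]
    have hH : yl ∈ Hset m T r := by
      intro j
      refine ⟨hCL j, ?_⟩
      have heq : ∫ t, yl t j ∂μ = ∫ t, (xbar t j + lam * (y t j - xbar t j)) ∂μ := by
        apply integral_congr_ae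
        filter_upwards [hcoe] with t ht
        rw [ht]
        simp [PiLp.add_apply, PiLp.smul_apply, PiLp.sub_apply, smul_eq_mul]
      have hi2 : Integrable (fun t => lam * ((y : ℝ → EuclideanSpace ℝ (Fin m)) t j - xbar t j)) μ :=
        ((hint y j).sub (hint xbar j)).const_mul lam
      rw [heq, integral_add (hint xbar j) hi2,
        integral_const_mul, integral_sub (hint y j) (hint xbar j)]
      exact hkey j
    have h0 := hVI yl ⟨⟨hCL, hbudget⟩, hH⟩
    have hsub : yl - xbar = lam • (y - xbar) := by rw [hyl]; module
    rw [hsub, real_inner_smul_right] at h0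
    nlinarith [h0, hpos]
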